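/- Let H and 𝒦 be separable complex Hilbert spaces, U : ℝ → U(H) a strongly continuous unitary representation, Λ the translation representation (Λ(t)Φ)(s) = Φ(s − t) on L²(ℝ; 𝒦), and W : H → L²(ℝ; 𝒦) an isometry with W U(t) = Λ(t) W for all t. Let 𝒫 = {a*a : a ∈ B(H), C_a < ∞} and 𝒟 = span_ℂ 𝒫. Then 𝒟 is a *-subalgebra of B(H) (closed under addition, scalar multiplication, products and adjoints), and 𝒟 is dense in B(H) in both the weak operator topology and the strong operator topology. -/

import Mathlib

open MeasureTheory
open scoped ENNReal NNReal

local notation "⟪" x ", " y "⟫_ℂ" => @inner ℂ _ _ x y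

set_option linter.unusedSectionVars false
set_option maxHeartbeats 1000000

noncomputable section

/-- `Csq U a` is the square `C_a²` of the constant
`C_a = (sup_{‖ψ‖=1} ∫_ℝ ‖a U(t)* ψ‖² dt)^{1/2} ∈ [0,∞]`. -/
def Csq {H : Type*} [NormedAddCommGroup H] [InnerProductSpace ℂ H] [CompleteSpace H]
    (U : ℝ → (H →L[ℂ] H)) (a : H →L[ℂ] H) : ℝ≥0∞ :=
  ⨆ ψ : {ψ : H // ‖ψ‖ = 1}, ∫⁻ t : ℝ, (‖a (star (U t) (ψ : H))‖₊ : ℝ≥0∞) ^ 2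

/-- The set `𝒫 = {a*a : C_a < ∞}` of positive `t`-integrable operators. -/
def posTIntegrable {H : Type*} [NormedAddCommGroup H] [InnerProductSpace ℂ H] [CompleteSpace H]
    (U : ℝ → (H →L[ℂ] H)) : Set (H →L[ℂ] H) :=
  {x | ∃ a : H →L[ℂ] H, Csq U a ≠ ⊤ ∧ x = star a * a}


namespace Stmt12Aux

variable {H K : Type*}
  [NormedAddCommGroup H] [InnerProductSpace ℂ H] [CompleteSpace H]
  [NormedAddCommGroup K] [InnerProductSpace ℂ K] [CompleteSpace K]

lemma sqnorm (g : Lp K 2 (volume : Measure ℝ)) :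
    (‖g‖₊ : ℝ≥0∞)^2 = ∫⁻ s, (‖g s‖₊ : ℝ≥0∞)^2 ∂(volume) := by
  have h1 : ((‖g‖₊ : ℝ≥0∞)) = eLpNorm g 2 volume := by
    rw [Lp.nnnorm_def, ENNReal.coe_toNNReal (Lp.eLpNorm_ne_top g)]
  rw [h1, eLpNorm_eq_lintegral_rpow_enorm_toReal (by norm_num) (by norm_num)]
  simp only [enorm_eq_nnnorm]
  rw [← ENNReal.rpow_natCast _ 2, ← ENNReal.rpow_mul]
  norm_num

lemma lintegral_le_Csq (U : ℝ → (H →L[ℂ] H)) (a : H →L[ℂ] H) {ψ : H} (hψ : ‖ψ‖ = 1) :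
    (∫⁻ t : ℝ, (‖a (star (U t) ψ)‖₊ : ℝ≥0∞) ^ 2) ≤ Csq U a :=
  le_iSup (fun φ : {φ : H // ‖φ‖ = 1} =>
    ∫⁻ t : ℝ, (‖a (star (U t) (φ : H))‖₊ : ℝ≥0∞) ^ 2) ⟨ψ, hψ⟩

lemma Csq_mul_le (U : ℝ → (H →L[ℂ] H)) (b a : H →L[ℂ] H) :
    Csq U (b * a) ≤ (‖b‖₊ : ℝ≥0∞)^2 * Csq U a := by
  refine iSup_le fun ψ => ?_
  calc ∫⁻ t : ℝ, (‖(b * a) (star (U t) (ψ : H))‖₊ : ℝ≥0∞) ^ 2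
      ≤ ∫⁻ t : ℝ, (‖b‖₊ : ℝ≥0∞)^2 * (‖a (star (U t) (ψ : H))‖₊ : ℝ≥0∞) ^ 2 := by
        refine lintegral_mono fun t => ?_
        rw [← mul_pow]
        gcongr
        rw [ContinuousLinearMap.mul_apply]
        exact ENNReal.coe_le_coe.mpr (b.le_opNNNorm _)
    _ = (‖b‖₊ : ℝ≥0∞)^2 * ∫⁻ t : ℝ, (‖a (star (U t) (ψ : H))‖₊ : ℝ≥0∞) ^ 2 :=
        lintegral_const_mul' _ _ (ENNReal.pow_ne_top ENNReal.coe_ne_top)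
    _ ≤ (‖b‖₊ : ℝ≥0∞)^2 * Csq U a := by gcongr; exact lintegral_le_Csq U a ψ.2

lemma Csq_smul_le (U : ℝ → (H →L[ℂ] H)) (c : ℂ) (a : H →L[ℂ] H) :
    Csq U (c • a) ≤ (‖c‖₊ : ℝ≥0∞)^2 * Csq U a := by
  refine iSup_le fun ψ => ?_
  have h : ∀ t : ℝ, (‖(c • a) (star (U t) (ψ : H))‖₊ : ℝ≥0∞) ^ 2
      = (‖c‖₊ : ℝ≥0∞)^2 * (‖a (star (U t) (ψ : H))‖₊ : ℝ≥0∞) ^ 2 := by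
    intro t
    rw [ContinuousLinearMap.smul_apply, nnnorm_smul, ← mul_pow]
    push_cast; ring
  simp_rw [h]
  rw [lintegral_const_mul' _ _ (ENNReal.pow_ne_top ENNReal.coe_ne_top)]
  gcongr
  exact lintegral_le_Csq U a ψ.2

lemma sq_add_le (x y : ℝ≥0∞) : (x + y)^2 ≤ 4 * (x^2 + y^2) := by
  rcases le_total x y with h | h
  · calc (x + y)^2 ≤ (y + y)^2 := by gcongr
      _ = 4 * y^2 := by ring
      _ ≤ 4 * (x^2 + y^2) := by gcongr; exact le_add_self
  · calc (x + y)^2 ≤ (x + x)^2 := by gcongr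
      _ = 4 * x^2 := by ring
      _ ≤ 4 * (x^2 + y^2) := by gcongr; exact le_self_add

lemma meas_integrand (U : ℝ → (H →L[ℂ] H))
    (hsm : ∀ ψ : H, Continuous fun t : ℝ => star (U t) ψ) (a : H →L[ℂ] H) (ψ : H) :
    Measurable fun t : ℝ => (‖a (star (U t) ψ)‖₊ : ℝ≥0∞) ^ 2 :=
  ((((a.continuous.comp (hsm ψ)).nnnorm.measurable).coe_nnreal_ennreal).pow_const 2)

lemma Csq_add_le (U : ℝ → (H →L[ℂ] H))
    (hsm : ∀ ψ : H, Continuous fun t : ℝ => star (U t) ψ) (a b : H →L[ℂ] H) :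
    Csq U (a + b) ≤ 4 * (Csq U a + Csq U b) := by
  refine iSup_le fun ψ => ?_
  calc ∫⁻ t : ℝ, (‖(a + b) (star (U t) (ψ : H))‖₊ : ℝ≥0∞) ^ 2
      ≤ ∫⁻ t : ℝ, 4 * ((‖a (star (U t) (ψ : H))‖₊ : ℝ≥0∞) ^ 2
          + (‖b (star (U t) (ψ : H))‖₊ : ℝ≥0∞) ^ 2) := by
        refine lintegral_mono fun t => ?_
        refine le_trans ?_ (sq_add_le _ _)
        rw [ContinuousLinearMap.add_apply]
        gcongr
        exact ENNReal.coe_le_coe.mpr (nnnorm_add_le _ _)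
    _ = 4 * ((∫⁻ t : ℝ, (‖a (star (U t) (ψ : H))‖₊ : ℝ≥0∞) ^ 2)
          + ∫⁻ t : ℝ, (‖b (star (U t) (ψ : H))‖₊ : ℝ≥0∞) ^ 2) := by
        rw [lintegral_const_mul' _ _ (by norm_num),
          lintegral_add_left (meas_integrand U hsm a ψ)]
    _ ≤ 4 * (Csq U a + Csq U b) := by
        gcongr
        exacts [lintegral_le_Csq U a ψ.2, lintegral_le_Csq U b ψ.2]

lemma star_mul_mem_span (U : ℝ → (H →L[ℂ] H))
    (hsm : ∀ ψ : H, Continuous fun t : ℝ => star (U t) ψ)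
    {a b : H →L[ℂ] H} (ha : Csq U a ≠ ⊤) (hb : Csq U b ≠ ⊤) :
    star a * b ∈ Submodule.span ℂ (posTIntegrable U) := by
  have key : star a * b = (4:ℂ)⁻¹ • (∑ k ∈ Finset.range 4, (Complex.I)^k •
      (star (b + (Complex.I)^k • a) * (b + (Complex.I)^k • a))) := by
    simp only [Finset.sum_range_succ, Finset.sum_range_zero, pow_zero, pow_one, pow_two, pow_succ,
      Complex.I_mul_I, star_add, star_smul, add_mul, mul_add, smul_mul_assoc, mul_smul_comm,
      smul_smul, Complex.conj_I, map_one, map_neg, neg_mul, one_mul, mul_one, neg_neg, one_smul,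
      neg_smul, smul_add, smul_neg, zero_add, mul_neg]
    ring_nf
    simp [Complex.I_mul_I]
    module
  rw [key]
  refine Submodule.smul_mem _ _ (Submodule.sum_mem _ fun k _ => Submodule.smul_mem _ _ ?_)
  refine Submodule.subset_span ⟨b + (Complex.I)^k • a, ?_, rfl⟩
  intro htop
  have h1 : Csq U ((Complex.I)^k • a) ≤ (‖(Complex.I)^k‖₊ : ℝ≥0∞)^2 * Csq U a :=
    Csq_smul_le U _ a
  have h2 : Csq U (b + (Complex.I)^k • a) ≤ 4 * (Csq U b + Csq U ((Complex.I)^k • a)) :=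
    Csq_add_le U hsm _ _
  rw [htop] at h2
  have : (4 : ℝ≥0∞) * (Csq U b + Csq U ((Complex.I)^k • a)) ≠ ⊤ := by
    refine ENNReal.mul_ne_top (by norm_num) (ENNReal.add_ne_top.mpr ⟨hb, ?_⟩)
    exact ne_top_of_le_ne_top (ENNReal.mul_ne_top (ENNReal.pow_ne_top ENNReal.coe_ne_top) ha) h1
  exact this (top_le_iff.mp h2)

end Stmt12Aux
open MeasureTheory
open scoped ENNReal NNReal
noncomputable section
variable {K : Type*} [NormedAddCommGroup K] [InnerProductSpace ℂ K] [CompleteSpace K]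

def indLp (A : Set ℝ) (hA : MeasurableSet A) :
    Lp K 2 (volume : Measure ℝ) →L[ℂ] Lp K 2 (volume : Measure ℝ) :=
  LinearMap.mkContinuous
    { toFun := fun g => (MemLp.indicator hA (Lp.memLp g)).toLp (A.indicator g)
      map_add' := by
        intro g h
        apply Lp.ext
        filter_upwards [MemLp.coeFn_toLp (f := A.indicator (g+h)) (MemLp.indicator hA (Lp.memLp (g+h))),
          MemLp.coeFn_toLp (f := A.indicator g) (MemLp.indicator hA (Lp.memLp g)),
          MemLp.coeFn_toLp (f := A.indicator h) (MemLp.indicator hA (Lp.memLp h)),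
          Lp.coeFn_add ((MemLp.indicator hA (Lp.memLp g)).toLp (A.indicator g))
            ((MemLp.indicator hA (Lp.memLp h)).toLp (A.indicator h)),
          Lp.coeFn_add g h] with s h1 h2 h3 h4 h5
        rw [h1, h4]
        simp only [Pi.add_apply]
        rw [h2, h3]
        by_cases hs : s ∈ A
        · simp only [Set.indicator_of_mem hs, h5, Pi.add_apply]
        · simp only [Set.indicator_of_notMem hs, add_zero]
      map_smul' := by
        intro c g
        apply Lp.ext
        filter_upwards [MemLp.coeFn_toLp (f := A.indicator (c • g)) (MemLp.indicator hA (Lp.memLp (c • g))),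
          MemLp.coeFn_toLp (f := A.indicator g) (MemLp.indicator hA (Lp.memLp g)),
          Lp.coeFn_smul c ((MemLp.indicator hA (Lp.memLp g)).toLp (A.indicator g)),
          Lp.coeFn_smul c g] with s h1 h2 h3 h4
        simp only [RingHom.id_apply]
        rw [h1, h3]
        simp only [Pi.smul_apply]
        rw [h2]
        by_cases hs : s ∈ A
        · simp only [Set.indicator_of_mem hs, h4, Pi.smul_apply]
        · simp only [Set.indicator_of_notMem hs, smul_zero] }
    1
    (by
      intro g
      simp only [LinearMap.coe_mk, AddHom.coe_mk, one_mul]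
      rw [Lp.norm_toLp (A.indicator g) (MemLp.indicator hA (Lp.memLp g)), Lp.norm_def]
      exact ENNReal.toReal_mono (Lp.eLpNorm_ne_top g) (eLpNorm_indicator_le _))

lemma indLp_coeFn (A : Set ℝ) (hA : MeasurableSet A) (g : Lp K 2 (volume : Measure ℝ)) :
    (indLp A hA g : ℝ → K) =ᵐ[volume] A.indicator g :=
  MemLp.coeFn_toLp (f := A.indicator g) (MemLp.indicator hA (Lp.memLp g))

lemma indLp_norm_le (A : Set ℝ) (hA : MeasurableSet A) (g : Lp K 2 (volume : Measure ℝ)) :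
    ‖indLp A hA g‖ ≤ ‖g‖ := by
  show ‖(MemLp.indicator hA (Lp.memLp g)).toLp (A.indicator g)‖ ≤ ‖g‖
  rw [Lp.norm_toLp (A.indicator g) (MemLp.indicator hA (Lp.memLp g)), Lp.norm_def]
  exact ENNReal.toReal_mono (Lp.eLpNorm_ne_top g) (eLpNorm_indicator_le _)

lemma indLp_adjoint (A : Set ℝ) (hA : MeasurableSet A) :
    ContinuousLinearMap.adjoint (indLp (K := K) A hA) = indLp A hA := by
  symm
  rw [ContinuousLinearMap.eq_adjoint_iff]
  intro x y
  rw [L2.inner_def, L2.inner_def]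
  refine integral_congr_ae ?_
  filter_upwards [indLp_coeFn A hA x, indLp_coeFn A hA y] with s h1 h2
  rw [h1, h2]
  by_cases hs : s ∈ A
  · simp only [Set.indicator_of_mem hs]
  · simp only [Set.indicator_of_notMem hs, inner_zero_left, inner_zero_right]

end

namespace Stmt12Aux

variable {H K : Type*}
  [NormedAddCommGroup H] [InnerProductSpace ℂ H] [CompleteSpace H]
  [NormedAddCommGroup K] [InnerProductSpace ℂ K] [CompleteSpace K]

lemma star_U (U : ℝ → (H →L[ℂ] H)) (hU0 : U 0 = 1) (hUadd : ∀ s t : ℝ, U (s + t) = U s * U t)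
    (hUuni : ∀ t : ℝ, U t ∈ unitary (H →L[ℂ] H)) (t : ℝ) : star (U t) = U (-t) := by
  have h1 : U t * U (-t) = 1 := by rw [← hUadd]; simp [hU0]
  have h2 : star (U t) * U t = 1 := (hUuni t).1
  calc star (U t) = star (U t) * (U t * U (-t)) := by rw [h1, mul_one]
    _ = (star (U t) * U t) * U (-t) := by rw [mul_assoc]
    _ = U (-t) := by rw [h2, one_mul]

lemma exists_approx (U : ℝ → (H →L[ℂ] H))
    (hU0 : U 0 = 1) (hUadd : ∀ s t : ℝ, U (s + t) = U s * U t)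
    (hUuni : ∀ t : ℝ, U t ∈ unitary (H →L[ℂ] H))
    (W : H →ₗᵢ[ℂ] Lp K 2 (volume : Measure ℝ))
    (hW : ∀ (t : ℝ) (ψ : H),
        (W (U t ψ) : ℝ → K) =ᵐ[volume] fun s => (W ψ : Lp K 2 (volume : Measure ℝ)) (s - t))
    (s : Finset H) {δ : ℝ} (hδ : 0 < δ) :
    ∃ e : H →L[ℂ] H, e ∈ posTIntegrable U ∧ (∀ x : H, ‖e x‖ ≤ ‖x‖) ∧
      ∀ ψ ∈ s, ‖e ψ - ψ‖ < δ := by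
  classical
  set Wc : H →L[ℂ] Lp K 2 (volume : Measure ℝ) := W.toContinuousLinearMap with hWc
  have hWc_apply : ∀ x : H, Wc x = W x := fun _ => rfl
  set Wd := ContinuousLinearMap.adjoint Wc with hWdd
  have hWc_norm : ∀ x : H, ‖Wc x‖ = ‖x‖ := fun x => W.norm_map x
  have hWcop : ‖Wc‖ ≤ 1 :=
    Wc.opNorm_le_bound zero_le_one fun x => by rw [hWc_norm, one_mul]
  have hWd_norm : ∀ y, ‖Wd y‖ ≤ ‖y‖ := by
    intro y
    have h := Wd.le_opNorm y
    have h2 : ‖Wd‖ = ‖Wc‖ := ContinuousLinearMap.adjoint.norm_map Wc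
    nlinarith [norm_nonneg y, norm_nonneg (Wd y)]
  have hWdW : ∀ x : H, Wd (Wc x) = x := by
    intro x
    refine ext_inner_right ℂ fun y => ?_
    rw [hWdd, ContinuousLinearMap.adjoint_inner_left]
    rw [hWc_apply, hWc_apply]
    exact W.inner_map_map x y
  set A : ℕ → Set ℝ := fun n => Set.Icc (-(n : ℝ)) n with hA
  have hAm : ∀ n, MeasurableSet (A n) := fun n => measurableSet_Icc
  set χ : ℕ → (Lp K 2 (volume : Measure ℝ) →L[ℂ] Lp K 2 (volume : Measure ℝ)) :=
    fun n => indLp (A n) (hAm n) with hχ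
  set aop : ℕ → (H →L[ℂ] H) := fun n => Wd.comp ((χ n).comp Wc) with haop
  have haop_apply : ∀ n x, aop n x = Wd (χ n (Wc x)) := fun n x => rfl
  have haop_pt : ∀ n (x : H), ‖aop n x‖ ≤ ‖x‖ := by
    intro n x
    rw [haop_apply]
    refine (hWd_norm _).trans ?_
    refine (indLp_norm_le _ _ _).trans ?_
    rw [hWc_norm]
  have hstar : ∀ n, star (aop n) = aop n := by
    intro n
    rw [ContinuousLinearMap.star_eq_adjoint, haop]
    simp only [ContinuousLinearMap.adjoint_comp, ContinuousLinearMap.adjoint_adjoint, hWdd]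
    rw [indLp_adjoint, ContinuousLinearMap.comp_assoc]
  have hU_star : ∀ t : ℝ, star (U t) = U (-t) := star_U U hU0 hUadd hUuni
  -- finiteness of Csq
  have hCsq : ∀ n, Csq U (aop n) ≠ ⊤ := by
    intro n
    have hbound : Csq U (aop n) ≤ volume (A n) := by
      refine iSup_le fun ψ => ?_
      obtain ⟨ψ, hψ⟩ := ψ
      set g : Lp K 2 (volume : Measure ℝ) := W ψ with hg
      have hgm := (Lp.aestronglyMeasurable g)
      set f : ℝ → K := hgm.mk g with hfdef
      have hf : StronglyMeasurable f := hgm.stronglyMeasurable_mk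
      have hgf : (g : ℝ → K) =ᵐ[volume] f := hgm.ae_eq_mk
      have hfint : (∫⁻ t : ℝ, (‖f t‖₊ : ℝ≥0∞) ^ 2) = 1 := by
        have hcg : (∫⁻ t : ℝ, (‖f t‖₊ : ℝ≥0∞) ^ 2)
            = ∫⁻ t : ℝ, (‖(g : ℝ → K) t‖₊ : ℝ≥0∞) ^ 2 :=
          lintegral_congr_ae (by filter_upwards [hgf] with t ht; rw [ht])
        rw [hcg, ← sqnorm g]
        have : ‖g‖ = 1 := by rw [hg, W.norm_map, hψ]
        have h2 : ‖g‖₊ = 1 := by ext; exact this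
        rw [h2]; simp
      calc ∫⁻ t : ℝ, (‖(aop n) (star (U t) ψ)‖₊ : ℝ≥0∞) ^ 2
          ≤ ∫⁻ t : ℝ, ∫⁻ s : ℝ, ((A n).indicator (fun _ => (1:ℝ≥0∞)) s)
              * (‖f (s + t)‖₊ : ℝ≥0∞) ^ 2 ∂volume := by
            refine lintegral_mono_ae (Filter.Eventually.of_forall fun t => ?_)
            have step1 : (‖(aop n) (star (U t) ψ)‖₊ : ℝ≥0∞) ^ 2
                ≤ (‖(χ n) (Wc (U (-t) ψ))‖₊ : ℝ≥0∞) ^ 2 := by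
              gcongr
              rw [hU_star, haop_apply]
              exact_mod_cast hWd_norm _
            refine step1.trans ?_
            have step2 : (‖(χ n) (Wc (U (-t) ψ))‖₊ : ℝ≥0∞) ^ 2
                = ∫⁻ s : ℝ, ((A n).indicator (fun _ => (1:ℝ≥0∞)) s)
                    * (‖f (s + t)‖₊ : ℝ≥0∞) ^ 2 ∂volume := by
              rw [sqnorm]
              refine lintegral_congr_ae ?_
              have h1 := indLp_coeFn (A n) (hAm n) (Wc (U (-t) ψ))
              have h2 := hW (-t) ψ
              have h3 : (fun s : ℝ => (g : ℝ → K) (s + t)) =ᵐ[volume]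
                  (fun s : ℝ => f (s + t)) :=
                (measurePreserving_add_right volume t).quasiMeasurePreserving.ae_eq_comp hgf
              filter_upwards [h1, h2, h3] with s h1s h2s h3s
              rw [h1s]
              by_cases hs : s ∈ A n
              · rw [Set.indicator_of_mem hs, Set.indicator_of_mem hs, one_mul]
                have : (Wc (U (-t) ψ) : ℝ → K) s = (W (U (-t) ψ) : ℝ → K) s := rfl
                rw [this, h2s, sub_neg_eq_add, ← h3s]
              · rw [Set.indicator_of_notMem hs, Set.indicator_of_notMem hs, zero_mul]
                simp
            exact le_of_eq step2
        _ = ∫⁻ s : ℝ, ∫⁻ t : ℝ, ((A n).indicator (fun _ => (1:ℝ≥0∞)) s)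
              * (‖f (s + t)‖₊ : ℝ≥0∞) ^ 2 ∂volume ∂volume := by
            refine lintegral_lintegral_swap ?_
            refine Measurable.aemeasurable ?_
            refine Measurable.mul ?_ ?_
            · exact (measurable_const.indicator (hAm n)).comp measurable_snd
            · exact ((hf.nnnorm.measurable.coe_nnreal_ennreal).comp (measurable_snd.add measurable_fst)).pow_const 2
        _ = ∫⁻ s : ℝ, ((A n).indicator (fun _ => (1:ℝ≥0∞)) s)
              * ∫⁻ t : ℝ, (‖f (s + t)‖₊ : ℝ≥0∞) ^ 2 ∂volume ∂volume := by
            refine lintegral_congr fun s => ?_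
            refine lintegral_const_mul' _ _ ?_
            by_cases hs : s ∈ A n <;> simp [hs]
        _ = ∫⁻ s : ℝ, ((A n).indicator (fun _ => (1:ℝ≥0∞)) s) ∂volume := by
            refine lintegral_congr fun s => ?_
            have h9 : (∫⁻ t : ℝ, (‖f (s + t)‖₊ : ℝ≥0∞) ^ 2 ∂volume) = 1 := by
              have hrw : ∀ t : ℝ, s + t = t + s := fun t => add_comm s t
              simp_rw [hrw]
              rw [lintegral_add_right_eq_self (fun t => (‖f t‖₊ : ℝ≥0∞) ^ 2) s]
              exact hfint
            rw [h9, mul_one]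
        _ = volume (A n) := by
            rw [lintegral_indicator (hAm n)]
            simp
    intro htop
    rw [htop] at hbound
    have : volume (A n) ≠ ⊤ := by
      rw [hA]; simp only [Real.volume_Icc]; exact ENNReal.ofReal_ne_top
    exact this (top_le_iff.mp hbound)
  -- convergence
  have hconv : ∀ ψ : H, ∃ N : ℕ, ∀ n ≥ N, ‖χ n (W ψ) - W ψ‖ < δ / 2 := by
    intro ψ
    set g : Lp K 2 (volume : Measure ℝ) := W ψ with hg
    have hgm := (Lp.aestronglyMeasurable g)
    set f : ℝ → K := hgm.mk g with hfdef
    have hf : StronglyMeasurable f := hgm.stronglyMeasurable_mk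
    have hgf : (g : ℝ → K) =ᵐ[volume] f := hgm.ae_eq_mk
    set ν : Measure ℝ := volume.withDensity (fun s => (‖f s‖₊ : ℝ≥0∞) ^ 2) with hν
    have hkey : ∀ n : ℕ, (‖χ n g - g‖₊ : ℝ≥0∞) ^ 2 = ν ((A n)ᶜ) := by
      intro n
      rw [sqnorm, hν, withDensity_apply _ (hAm n).compl, ← lintegral_indicator (hAm n).compl]
      refine lintegral_congr_ae ?_
      filter_upwards [Lp.coeFn_sub (χ n g) g, indLp_coeFn (A n) (hAm n) g, hgf]
        with t h1 h2 h3
      rw [h1]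
      simp only [Pi.sub_apply]
      rw [h2]
      by_cases ht : t ∈ A n
      · rw [Set.indicator_of_mem ht, Set.indicator_of_notMem (by simpa using ht), sub_self]
        simp
      · rw [Set.indicator_of_notMem ht, Set.indicator_of_mem (by simpa using ht), zero_sub,
          nnnorm_neg, h3]
    have hanti : Antitone fun n : ℕ => (A n)ᶜ := by
      intro m n hmn
      refine Set.compl_subset_compl.mpr ?_
      exact Set.Icc_subset_Icc (neg_le_neg (Nat.cast_le.mpr hmn)) (Nat.cast_le.mpr hmn)
    have hInter : (⋂ n : ℕ, (A n)ᶜ) = ∅ := by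
      ext x
      simp only [Set.mem_iInter, Set.mem_compl_iff, Set.mem_empty_iff_false, iff_false,
        not_forall, not_not]
      refine ⟨⌈|x|⌉₊, ?_⟩
      have hx : |x| ≤ (⌈|x|⌉₊ : ℝ) := Nat.le_ceil _
      have := abs_le.mp hx
      exact Set.mem_Icc.mpr this
    have hfin : ν ((A 0)ᶜ) ≠ ⊤ := by
      rw [← hkey 0]
      exact ENNReal.pow_ne_top ENNReal.coe_ne_top
    have htend : Filter.Tendsto (fun n => ν ((A n)ᶜ)) Filter.atTop (nhds 0) := by
      have h := tendsto_measure_iInter_atTop (μ := ν)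
        (fun n => ((hAm n).compl).nullMeasurableSet) hanti ⟨0, hfin⟩
      rw [hInter] at h
      simpa [Function.comp_def] using h
    have hev : ∀ᶠ n in Filter.atTop, ν ((A n)ᶜ) < (ENNReal.ofReal (δ/2))^2 := by
      refine htend.eventually_lt_const ?_
      have : (0:ℝ≥0∞) < ENNReal.ofReal (δ/2) := ENNReal.ofReal_pos.mpr (half_pos hδ)
      positivity
    obtain ⟨N, hN⟩ := Filter.eventually_atTop.mp hev
    refine ⟨N, fun n hn => ?_⟩
    have h2 := hN n hn
    rw [← hkey n] at h2
    have h3 : (‖χ n g - g‖₊ : ℝ≥0∞) < ENNReal.ofReal (δ/2) := by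
      by_contra hcon
      push_neg at hcon
      refine absurd h2 (not_lt.mpr ?_)
      gcongr
    have h5 : ((δ/2).toNNReal : ℝ) = δ/2 := Real.coe_toNNReal _ (le_of_lt (half_pos hδ))
    have h4 : ‖χ n g - g‖ < δ/2 := by
      rw [ENNReal.ofReal] at h3
      have h6 := ENNReal.coe_lt_coe.mp h3
      calc ‖χ n g - g‖ = ((‖χ n g - g‖₊ : ℝ≥0) : ℝ) := rfl
        _ < ((δ/2).toNNReal : ℝ) := NNReal.coe_lt_coe.mpr h6
        _ ≤ δ/2 := le_of_eq h5
    exact h4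
  -- assembly
  choose Nf hNf using hconv
  set N := s.sup Nf with hNdef
  refine ⟨star (aop N) * aop N, ⟨aop N, hCsq N, rfl⟩, ?_, ?_⟩
  · intro x
    rw [hstar]
    calc ‖(aop N * aop N) x‖ = ‖aop N (aop N x)‖ := rfl
      _ ≤ ‖aop N x‖ := haop_pt N _
      _ ≤ ‖x‖ := haop_pt N x
  · intro ψ hψ
    have hNle : Nf ψ ≤ N := Finset.le_sup hψ
    have happ : ‖χ N (Wc ψ) - Wc ψ‖ < δ / 2 := hNf ψ N hNle
    set g : Lp K 2 (volume : Measure ℝ) := Wc ψ with hgdef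
    set u : Lp K 2 (volume : Measure ℝ) := χ N g with hudef
    have he : (star (aop N) * aop N) ψ = Wd (χ N (Wc (Wd u))) := by
      rw [hstar]; rfl
    have hWcg : Wc (Wd g) = g := by
      have : Wd g = ψ := hWdW ψ
      rw [this]
    have e1 : ‖(star (aop N) * aop N) ψ - ψ‖ ≤ ‖χ N (Wc (Wd u)) - g‖ := by
      conv_lhs => rw [he, ← hWdW ψ]
      rw [← map_sub]
      exact hWd_norm _
    have e2 : ‖χ N (Wc (Wd u)) - g‖ ≤ ‖χ N (Wc (Wd u)) - χ N g‖ + ‖χ N g - g‖ := by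
      have := dist_triangle (χ N (Wc (Wd u))) (χ N g) g
      simpa [dist_eq_norm] using this
    have e3 : ‖χ N (Wc (Wd u)) - χ N g‖ ≤ ‖u - g‖ := by
      rw [← map_sub]
      refine (indLp_norm_le (A N) (hAm N) _).trans ?_
      conv_lhs => rw [← hWcg]
      rw [← map_sub, hWc_norm, ← map_sub]
      exact hWd_norm _
    have : ‖(star (aop N) * aop N) ψ - ψ‖ ≤ 2 * ‖χ N g - g‖ := by
      have := e1.trans (e2.trans (by linarith [e3] : ‖χ N (Wc (Wd u)) - χ N g‖ + ‖χ N g - g‖ ≤ 2 * ‖χ N g - g‖))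
      exact this
    calc ‖(star (aop N) * aop N) ψ - ψ‖ ≤ 2 * ‖χ N g - g‖ := this
      _ < 2 * (δ / 2) := by linarith [happ]
      _ = δ := by ring

end Stmt12Aux

/-- With `W : H → L²(ℝ;𝒦)` an isometry intertwining the strongly continuous
unitary one-parameter group `U` with the translation representation, the linear span
`𝒟 = span ℂ 𝒫` of the positive `t`-integrable operators is a *-subalgebra of `B(H)` (closed
under products and adjoints), and it is dense in `B(H)` in both the weak and the strong
operator topology (density expressed by approximation of matrix elements, resp. of vectors,
over finite families). -/
theorem stmt12 {H K : Type*}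
    [NormedAddCommGroup H] [InnerProductSpace ℂ H] [CompleteSpace H] [SecondCountableTopology H]
    [NormedAddCommGroup K] [InnerProductSpace ℂ K] [CompleteSpace K] [SecondCountableTopology K]
    (U : ℝ → (H →L[ℂ] H))
    (hU0 : U 0 = 1) (hUadd : ∀ s t : ℝ, U (s + t) = U s * U t)
    (hUuni : ∀ t : ℝ, U t ∈ unitary (H →L[ℂ] H))
    (hUcont : ∀ ψ : H, Continuous fun t : ℝ => U t ψ)
    (W : H →ₗᵢ[ℂ] Lp K 2 (volume : Measure ℝ))
    (hW : ∀ (t : ℝ) (ψ : H),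
        (W (U t ψ) : ℝ → K) =ᵐ[volume] fun s => (W ψ : Lp K 2 (volume : Measure ℝ)) (s - t)) :
    (∀ x ∈ Submodule.span ℂ (posTIntegrable U), ∀ y ∈ Submodule.span ℂ (posTIntegrable U),
        x * y ∈ Submodule.span ℂ (posTIntegrable U)) ∧
    (∀ x ∈ Submodule.span ℂ (posTIntegrable U), star x ∈ Submodule.span ℂ (posTIntegrable U)) ∧
    (∀ T : H →L[ℂ] H, ∀ ε : ℝ, 0 < ε → ∀ s : Finset (H × H),
        ∃ d ∈ Submodule.span ℂ (posTIntegrable U),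
          ∀ p ∈ s, ‖⟪p.1, (T - d) p.2⟫_ℂ‖ < ε) ∧
    (∀ T : H →L[ℂ] H, ∀ ε : ℝ, 0 < ε → ∀ s : Finset H,
        ∃ d ∈ Submodule.span ℂ (posTIntegrable U),
          ∀ ψ ∈ s, ‖(T - d) ψ‖ < ε) := by
  classical
  have hU_star : ∀ t : ℝ, star (U t) = U (-t) := Stmt12Aux.star_U U hU0 hUadd hUuni
  have hsm : ∀ ψ : H, Continuous fun t : ℝ => star (U t) ψ := by
    intro ψ
    have h : (fun t : ℝ => star (U t) ψ) = fun t : ℝ => U (-t) ψ := by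
      funext t; rw [hU_star]
    rw [h]
    exact (hUcont ψ).comp continuous_neg
  -- (1) products
  have hmul : ∀ x ∈ Submodule.span ℂ (posTIntegrable U),
      ∀ y ∈ Submodule.span ℂ (posTIntegrable U),
      x * y ∈ Submodule.span ℂ (posTIntegrable U) := by
    intro x hx
    induction hx using Submodule.span_induction with
    | mem p hp =>
      intro y hy
      induction hy using Submodule.span_induction with
      | mem q hq =>
        obtain ⟨a, ha, rfl⟩ := hp
        obtain ⟨b, hb, rfl⟩ := hq
        have key : (star a * a) * (star b * b) = star a * ((a * star b) * b) := by
          simp only [mul_assoc]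
        rw [key]
        refine Stmt12Aux.star_mul_mem_span U hsm ha ?_
        refine ne_top_of_le_ne_top ?_ (Stmt12Aux.Csq_mul_le U (a * star b) b)
        exact ENNReal.mul_ne_top (ENNReal.pow_ne_top ENNReal.coe_ne_top) hb
      | zero => rw [mul_zero]; exact Submodule.zero_mem _
      | add y z _ _ h1 h2 => rw [mul_add]; exact Submodule.add_mem _ h1 h2
      | smul c y _ h1 => rw [mul_smul_comm]; exact Submodule.smul_mem _ c h1
    | zero => intro y _; rw [zero_mul]; exact Submodule.zero_mem _
    | add x z _ _ h1 h2 =>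
      intro y hy; rw [add_mul]; exact Submodule.add_mem _ (h1 y hy) (h2 y hy)
    | smul c x _ h1 =>
      intro y hy; rw [smul_mul_assoc]; exact Submodule.smul_mem _ c (h1 y hy)
  -- (2) star
  have hstar : ∀ x ∈ Submodule.span ℂ (posTIntegrable U),
      star x ∈ Submodule.span ℂ (posTIntegrable U) := by
    intro x hx
    induction hx using Submodule.span_induction with
    | mem p hp =>
      obtain ⟨a, ha, rfl⟩ := hp
      rw [star_mul, star_star]
      exact Submodule.subset_span ⟨a, ha, rfl⟩
    | zero => rw [star_zero]; exact Submodule.zero_mem _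
    | add x y _ _ h1 h2 => rw [star_add]; exact Submodule.add_mem _ h1 h2
    | smul c x _ h1 => rw [star_smul]; exact Submodule.smul_mem _ _ h1
  -- (4) strong density
  have hstrong : ∀ T : H →L[ℂ] H, ∀ ε : ℝ, 0 < ε → ∀ s : Finset H,
      ∃ d ∈ Submodule.span ℂ (posTIntegrable U), ∀ ψ ∈ s, ‖(T - d) ψ‖ < ε := by
    intro T ε hε s
    set δ : ℝ := ε / (‖T‖ + 2) with hδdef
    have hTpos : (0:ℝ) < ‖T‖ + 2 := by positivity
    have hδ : 0 < δ := div_pos hε hTpos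
    obtain ⟨e, ⟨a, ha, hea⟩, hec, happ⟩ :=
      Stmt12Aux.exists_approx U hU0 hUadd hUuni W hW
        (s ∪ Finset.image (fun ψ => T ψ) s) hδ
    set d : H →L[ℂ] H := e * T * e with hd
    have hdmem : d ∈ Submodule.span ℂ (posTIntegrable U) := by
      have key : d = star a * (((a * T) * star a) * a) := by
        rw [hd, hea]; simp only [mul_assoc]
      rw [key]
      refine Stmt12Aux.star_mul_mem_span U hsm ha ?_
      refine ne_top_of_le_ne_top ?_ (Stmt12Aux.Csq_mul_le U ((a * T) * star a) a)
      exact ENNReal.mul_ne_top (ENNReal.pow_ne_top ENNReal.coe_ne_top) ha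
    refine ⟨d, hdmem, fun ψ hψ => ?_⟩
    have hψ1 : ψ ∈ s ∪ Finset.image (fun ψ => T ψ) s := Finset.mem_union_left _ hψ
    have hψ2 : T ψ ∈ s ∪ Finset.image (fun ψ => T ψ) s :=
      Finset.mem_union_right _ (Finset.mem_image_of_mem _ hψ)
    have h1 : ‖e (T ψ) - T ψ‖ < δ := happ _ hψ2
    have h2 : ‖e ψ - ψ‖ < δ := happ _ hψ1
    have hdapp : (T - d) ψ = T ψ - e (T (e ψ)) := by
      simp [hd, ContinuousLinearMap.sub_apply, ContinuousLinearMap.mul_apply]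
    rw [hdapp]
    have htri : ‖T ψ - e (T (e ψ))‖ ≤ ‖T ψ - e (T ψ)‖ + ‖e (T ψ) - e (T (e ψ))‖ := by
      have := dist_triangle (T ψ) (e (T ψ)) (e (T (e ψ)))
      simpa [dist_eq_norm] using this
    have h3 : ‖e (T ψ) - e (T (e ψ))‖ ≤ ‖T‖ * ‖ψ - e ψ‖ := by
      rw [← map_sub]
      refine (hec _).trans ?_
      rw [← map_sub]
      exact T.le_opNorm _
    have h4 : ‖T ψ - e (T ψ)‖ < δ := by
      rw [← norm_neg]; simpa [neg_sub] using h1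
    have h5 : ‖ψ - e ψ‖ < δ := by
      rw [← norm_neg]; simpa [neg_sub] using h2
    have h6 : ‖T‖ * ‖ψ - e ψ‖ ≤ ‖T‖ * δ :=
      mul_le_mul_of_nonneg_left (le_of_lt h5) (norm_nonneg T)
    have h7 : δ * (‖T‖ + 2) = ε := by
      rw [hδdef]; field_simp
    nlinarith [norm_nonneg T]
  refine ⟨hmul, hstar, ?_, hstrong⟩
  -- (3) weak density
  intro T ε hε s
  set M : ℝ := 1 + (s.sup fun p => ‖p.1‖₊ : ℝ≥0) with hM
  have hMpos : 0 < M := by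
    rw [hM]; positivity
  have hMb : ∀ p ∈ s, ‖p.1‖ ≤ M - 1 := by
    intro p hp
    have := Finset.le_sup (f := fun p : H × H => ‖p.1‖₊) hp
    have h2 : (‖p.1‖₊ : ℝ) ≤ ((s.sup fun p => ‖p.1‖₊ : ℝ≥0) : ℝ) := NNReal.coe_le_coe.mpr this
    rw [hM]; simpa using h2
  have hM1 : (0:ℝ) ≤ M - 1 := by
    rw [hM]; simp
  obtain ⟨d, hdmem, hd⟩ := hstrong T (ε / M) (div_pos hε hMpos) (s.image Prod.snd)
  refine ⟨d, hdmem, fun p hp => ?_⟩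
  have hps : p.2 ∈ s.image Prod.snd := Finset.mem_image_of_mem _ hp
  have hx := hd p.2 hps
  calc ‖⟪p.1, (T - d) p.2⟫_ℂ‖ ≤ ‖p.1‖ * ‖(T - d) p.2‖ := norm_inner_le_norm _ _
    _ ≤ (M - 1) * (ε / M) := by
        refine mul_le_mul (hMb p hp) (le_of_lt hx) (norm_nonneg _) hM1
    _ < M * (ε / M) := by
        refine mul_lt_mul_of_pos_right (by linarith) (div_pos hε hMpos)
    _ = ε := by field_simp

end
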